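/- Let p = [b_1^{a_1} ⋯ b_r^{a_r}] (b_1 ≥ ⋯ ≥ b_r) be a symplectic partition of 2n with b_1 even, and set P := [p_1 p_1 (2n*+1)] where 2n* = Σ_{i : b_i odd} a_i. Then in the dominance order on partitions of 2n+1 one has P^t ≥ p^+. -/

import Mathlib

namespace JiangWF

/-- `sCount p i` : the number of parts of `p` that are `≥ i`. -/
def sCount (p : Multiset ℕ) (i : ℕ) : ℕ := (p.filter (fun a => i ≤ a)).card

/-- `rCount p i` : the number of parts of `p` equal to `i`. -/
def rCount (p : Multiset ℕ) (i : ℕ) : ℕ := p.count i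

/-- The largest part of `p` (`0` for the empty partition). -/
def maxPart (p : Multiset ℕ) : ℕ := p.sup

/-- The smallest part of `p` (`0` for the empty partition). -/
noncomputable def minPart (p : Multiset ℕ) : ℕ := sInf {a : ℕ | a ∈ p}

/-- The transpose partition: its `i`-th part is `sCount p i`, for `1 ≤ i ≤ maxPart p`. -/
def transpose (p : Multiset ℕ) : Multiset ℕ :=
  (Multiset.range (maxPart p)).map fun i => sCount p (i + 1)

/-- The sum of the `m` largest parts of `p`. -/
def topSum (p : Multiset ℕ) (m : ℕ) : ℕ :=
  ∑ i ∈ Finset.Icc 1 p.sum, min m (sCount p i)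

/-- Dominance order: `domLE p q` means `p ≤ q`. -/
def domLE (p q : Multiset ℕ) : Prop := ∀ m, topSum p m ≤ topSum q m

/-- `p` is a partition of `N`: all parts positive, summing to `N`. -/
def IsPartitionOf (p : Multiset ℕ) (N : ℕ) : Prop := (∀ a ∈ p, 0 < a) ∧ p.sum = N

/-- Symplectic partition: every odd part occurs with even multiplicity. -/
def IsSymplectic (p : Multiset ℕ) : Prop := ∀ a, a % 2 = 1 → Even (p.count a)

/-- Orthogonal partition: every even part occurs with even multiplicity. -/
def IsOrthogonal (p : Multiset ℕ) : Prop := ∀ a, a % 2 = 0 → Even (p.count a)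

/-- `p^-`: decrease the smallest part by one (deleting it if it becomes `0`). -/
noncomputable def pMinus (p : Multiset ℕ) : Multiset ℕ :=
  if minPart p ≤ 1 then p.erase (minPart p)
  else (minPart p - 1) ::ₘ p.erase (minPart p)

/-- `p^+`: increase the largest part by one. -/
def pPlus (p : Multiset ℕ) : Multiset ℕ := (maxPart p + 1) ::ₘ p.erase (maxPart p)

/-- `p^{+-}`: increase the largest part by one and decrease the smallest by one. -/
noncomputable def pPM (p : Multiset ℕ) : Multiset ℕ := pMinus (pPlus p)

/-- `p₁ = [⌊b_1/2⌋^{a_1} ⋯ ⌊b_r/2⌋^{a_r}]^t` (discarding zero entries before transposing). -/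
def pOne (p : Multiset ℕ) : Multiset ℕ :=
  transpose ((p.map fun b => b / 2).filter fun x => 0 < x)

/-- `Σ_{i : b_i odd} a_i`: the number of odd parts of `p`. -/
def oddMult (p : Multiset ℕ) : ℕ := (p.filter fun a => a % 2 = 1).card

/-- `n* = ⌊(Σ_{i : b_i odd} a_i)/2⌋`. -/
def nStar (p : Multiset ℕ) : ℕ := oddMult p / 2

/-- Append an extra part `m` to `q`, omitted if `m = 0`. -/
def addPart (m : ℕ) (q : Multiset ℕ) : Multiset ℕ := if m = 0 then q else m ::ₘ q

/-- `c` is the `Sp`-collapse of `p`: the maximal symplectic partition `≤ p` in dominance. -/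
def IsSpCollapse (p c : Multiset ℕ) : Prop :=
  IsPartitionOf c p.sum ∧ IsSymplectic c ∧ domLE c p ∧
    ∀ c', IsPartitionOf c' p.sum → IsSymplectic c' → domLE c' p → domLE c' c

/-- `c` is the `SO`-collapse of `p`: the maximal orthogonal partition `≤ p` in dominance. -/
def IsSOCollapse (p c : Multiset ℕ) : Prop :=
  IsPartitionOf c p.sum ∧ IsOrthogonal c ∧ domLE c p ∧
    ∀ c', IsPartitionOf c' p.sum → IsOrthogonal c' → domLE c' p → domLE c' c

/-- `e` is the `Sp`-expansion of `p`: the minimal special symplectic partition `≥ p`. -/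
def IsSpExpansion (p e : Multiset ℕ) : Prop :=
  IsPartitionOf e p.sum ∧ IsSymplectic e ∧ IsSymplectic (transpose e) ∧ domLE p e ∧
    ∀ e', IsPartitionOf e' p.sum → IsSymplectic e' → IsSymplectic (transpose e') →
      domLE p e' → domLE e e'

/-- `e` is the `SO_{2n+1}`-expansion of `p`: the minimal special orthogonal partition `≥ p`
(odd case: special means the transpose is orthogonal). -/
def IsSOOddExpansion (p e : Multiset ℕ) : Prop :=
  IsPartitionOf e p.sum ∧ IsOrthogonal e ∧ IsOrthogonal (transpose e) ∧ domLE p e ∧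
    ∀ e', IsPartitionOf e' p.sum → IsOrthogonal e' → IsOrthogonal (transpose e') →
      domLE p e' → domLE e e'

/-- `e` is the `SO_{2n}`-expansion of `p`: the minimal special orthogonal partition `≥ p`
(even case: special means the transpose is symplectic). -/
def IsSOEvenExpansion (p e : Multiset ℕ) : Prop :=
  IsPartitionOf e p.sum ∧ IsOrthogonal e ∧ IsSymplectic (transpose e) ∧ domLE p e ∧
    ∀ e', IsPartitionOf e' p.sum → IsOrthogonal e' → IsSymplectic (transpose e') →
      domLE p e' → domLE e e'

/-- `dim_C(q)` for a symplectic partition `q` of `2k`: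
`2k² + k − (1/2)Σ s_i(q)² − (1/2)Σ_{i odd} r_i(q)` (note `2k² + k = (|q|² + |q|)/2`). -/
def dimC (p : Multiset ℕ) : ℚ :=
  ((p.sum : ℚ) ^ 2 + (p.sum : ℚ)) / 2
    - (∑ i ∈ Finset.Icc 1 p.sum, (sCount p i : ℚ) ^ 2) / 2
    - (∑ i ∈ Finset.Icc 1 p.sum, if i % 2 = 1 then (rCount p i : ℚ) else 0) / 2

/-- `dim_B(q)` for an orthogonal partition `q` of `2k+1`:
`2k² + k − (1/2)Σ s_i(q)² + (1/2)Σ_{i odd} r_i(q)` (note `2k² + k = (|q|² − |q|)/2`). -/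
def dimB (p : Multiset ℕ) : ℚ :=
  ((p.sum : ℚ) ^ 2 - (p.sum : ℚ)) / 2
    - (∑ i ∈ Finset.Icc 1 p.sum, (sCount p i : ℚ) ^ 2) / 2
    + (∑ i ∈ Finset.Icc 1 p.sum, if i % 2 = 1 then (rCount p i : ℚ) else 0) / 2

/-- `dim_D(q)` for an orthogonal partition `q` of `2k`:
`2k² − k − (1/2)Σ s_i(q)² + (1/2)Σ_{i odd} r_i(q)` (note `2k² − k = (|q|² − |q|)/2`). -/
def dimD (p : Multiset ℕ) : ℚ :=
  ((p.sum : ℚ) ^ 2 - (p.sum : ℚ)) / 2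
    - (∑ i ∈ Finset.Icc 1 p.sum, (sCount p i : ℚ) ^ 2) / 2
    + (∑ i ∈ Finset.Icc 1 p.sum, if i % 2 = 1 then (rCount p i : ℚ) else 0) / 2


-- basic sCount lemmas
lemma sCount_cons' (a : ℕ) (p : Multiset ℕ) (i : ℕ) :
    sCount (a ::ₘ p) i = (if i ≤ a then 1 else 0) + sCount p i := by
  unfold sCount
  rw [Multiset.filter_cons, Multiset.card_add]
  congr 1
  split <;> simp

lemma sCount_mono (p : Multiset ℕ) {i j : ℕ} (h : i ≤ j) : sCount p j ≤ sCount p i := by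
  induction p using Multiset.induction with
  | empty => simp [sCount]
  | cons a s ih => simp only [sCount_cons']; split <;> split <;> omega

lemma sCount_le_card (p : Multiset ℕ) (i : ℕ) : sCount p i ≤ Multiset.card p :=
  Multiset.card_le_card (Multiset.filter_le _ _)

lemma sCount_pos_iff (p : Multiset ℕ) (i : ℕ) : 1 ≤ sCount p i ↔ ∃ a ∈ p, i ≤ a := by
  unfold sCount
  rw [Nat.one_le_iff_ne_zero, ← Nat.pos_iff_ne_zero, Multiset.card_pos_iff_exists_mem]
  constructor
  · rintro ⟨a, ha⟩; exact ⟨a, (Multiset.mem_filter.mp ha).1, (Multiset.mem_filter.mp ha).2⟩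
  · rintro ⟨a, ha, hia⟩; exact ⟨a, Multiset.mem_filter.mpr ⟨ha, hia⟩⟩

lemma sCount_cons (a : ℕ) (p : Multiset ℕ) (i : ℕ) :
    sCount (a ::ₘ p) i = (if i ≤ a then 1 else 0) + sCount p i := by
  unfold sCount
  rw [Multiset.filter_cons, Multiset.card_add]
  congr 1
  split <;> simp

lemma sCount_add (p q : Multiset ℕ) (i : ℕ) :
    sCount (p + q) i = sCount p i + sCount q i := by
  unfold sCount; rw [Multiset.filter_add, Multiset.card_add]

lemma le_maxPart_of_mem {p : Multiset ℕ} {a : ℕ} (h : a ∈ p) : a ≤ maxPart p :=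
  Multiset.le_sup h

lemma maxPart_le_sum (p : Multiset ℕ) : maxPart p ≤ p.sum := by
  apply Multiset.sup_le.mpr
  intro b hb
  exact Multiset.single_le_sum (fun x _ => Nat.zero_le x) b hb

lemma card_le_sum {p : Multiset ℕ} (h : ∀ a ∈ p, 0 < a) : Multiset.card p ≤ p.sum := by
  induction p using Multiset.induction with
  | empty => simp
  | cons a s ih =>
    simp only [Multiset.card_cons, Multiset.sum_cons]
    have := h a (Multiset.mem_cons_self a s)
    have := ih (fun x hx => h x (Multiset.mem_cons_of_mem hx))
    omega

lemma maxPart_mem {p : Multiset ℕ} (h : p ≠ 0) : maxPart p ∈ p := by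
  induction p using Multiset.induction with
  | empty => exact absurd rfl h
  | cons a s ih =>
    unfold maxPart at *
    rw [Multiset.sup_cons]
    rcases eq_or_ne s 0 with rfl | hs
    · simp
    · rcases le_total a s.sup with h1 | h1
      · rw [sup_eq_right.mpr h1]; exact Multiset.mem_cons_of_mem (ih hs)
      · rw [sup_eq_left.mpr h1]; exact Multiset.mem_cons_self a s

-- min as a count
lemma min_eq_card (m s : ℕ) :
    min m s = ∑ j ∈ Finset.range m, if j + 1 ≤ s then 1 else 0 := by
  rw [← Finset.card_filter]
  have : (Finset.range m).filter (fun j => j + 1 ≤ s) = Finset.range (min m s) := by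
    ext a; simp [Nat.lt_min]
  rw [this, Finset.card_range]

-- workhorse: sum of sCount
lemma sum_sCount_range (q : Multiset ℕ) (N : ℕ) (h : ∀ b ∈ q, b ≤ N) :
    ∑ i ∈ Finset.range N, sCount q (i + 1) = q.sum := by
  induction q using Multiset.induction with
  | empty => simp [sCount]
  | cons a s ih =>
    simp only [sCount_cons, Finset.sum_add_distrib, Multiset.sum_cons]
    rw [ih (fun b hb => h b (Multiset.mem_cons_of_mem hb)), ← min_eq_card]
    have := h a (Multiset.mem_cons_self a s)
    omega

lemma sum_transpose (q : Multiset ℕ) : (transpose q).sum = q.sum := by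
  unfold transpose
  rw [← Finset.range_val, ← Finset.sum_eq_multiset_sum]
  exact sum_sCount_range q (maxPart q) (fun b hb => le_maxPart_of_mem hb)

lemma pos_of_mem_transpose {q : Multiset ℕ} {x : ℕ} (h : x ∈ transpose q) : 0 < x := by
  unfold transpose at h
  rw [Multiset.mem_map] at h
  obtain ⟨k, hk, rfl⟩ := h
  rw [Multiset.mem_range] at hk
  rw [← Nat.succ_le_iff, sCount_pos_iff]
  by_contra hcon
  push_neg at hcon
  have : maxPart q ≤ k := Multiset.sup_le.mpr (fun b hb => by
    have := hcon b hb; omega)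
  omega

/-- `Dp q j` is the `(j+1)`-st largest part of `q`. -/
def Dp (q : Multiset ℕ) (j : ℕ) : ℕ :=
  ((Finset.Icc 1 q.sum).filter (fun i => j + 1 ≤ sCount q i)).card

lemma topSum_eq (q : Multiset ℕ) (m : ℕ) :
    topSum q m = ∑ j ∈ Finset.range m, Dp q j := by
  unfold topSum Dp
  simp only [min_eq_card, Finset.card_filter]
  exact Finset.sum_comm

lemma filter_dc_eq_Icc (S : ℕ) (P : ℕ → Prop) [DecidablePred P]
    (hdc : ∀ i j, i ≤ j → P j → P i) (hbd : ∀ i, P i → i ≤ S) :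
    (Finset.Icc 1 S).filter P = Finset.Icc 1 (((Finset.Icc 1 S).filter P).card) := by
  rcases Finset.eq_empty_or_nonempty ((Finset.Icc 1 S).filter P) with he | hne
  · rw [he]; simp
  · obtain ⟨M, hMmem, hMge⟩ := Finset.exists_max_image _ id hne
    simp only [Finset.mem_filter, Finset.mem_Icc] at hMmem
    have hEq : (Finset.Icc 1 S).filter P = Finset.Icc 1 M := by
      ext i
      simp only [Finset.mem_filter, Finset.mem_Icc]
      constructor
      · intro ⟨⟨h1, h2⟩, h3⟩
        exact ⟨h1, hMge i (by simp only [Finset.mem_filter, Finset.mem_Icc]; tauto)⟩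
      · intro ⟨h1, h2⟩
        have hPi := hdc i M h2 hMmem.2
        exact ⟨⟨h1, hbd i hPi⟩, hPi⟩
    rw [hEq, Nat.card_Icc, Nat.add_sub_cancel]

lemma Dp_iff (q : Multiset ℕ) (j i : ℕ) (hi : 1 ≤ i) :
    j + 1 ≤ sCount q i ↔ i ≤ Dp q j := by
  have hbd : ∀ i', j + 1 ≤ sCount q i' → i' ≤ q.sum := by
    intro i' h
    have := (sCount_pos_iff q i').mp (le_trans (Nat.le_add_left 1 j) h)
    obtain ⟨a, ha, hia⟩ := this
    exact le_trans hia (le_trans (Multiset.single_le_sum (fun x _ => Nat.zero_le x) a ha) le_rfl)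
  have hdc : ∀ a b, a ≤ b → j + 1 ≤ sCount q b → j + 1 ≤ sCount q a :=
    fun a b hab h => le_trans h (sCount_mono q hab)
  have key := filter_dc_eq_Icc q.sum (fun i => j + 1 ≤ sCount q i) hdc hbd
  constructor
  · intro h
    have : i ∈ (Finset.Icc 1 q.sum).filter (fun i => j + 1 ≤ sCount q i) := by
      exact Finset.mem_filter.mpr ⟨Finset.mem_Icc.mpr ⟨hi, hbd i h⟩, h⟩
    rw [key] at this
    exact (Finset.mem_Icc.mp this).2
  · intro h
    unfold Dp at h
    have : i ∈ Finset.Icc 1 (((Finset.Icc 1 q.sum).filter (fun i => j + 1 ≤ sCount q i)).card) :=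
      Finset.mem_Icc.mpr ⟨hi, h⟩
    rw [← key] at this
    exact (Finset.mem_filter.mp this).2
lemma sCount_transpose (q : Multiset ℕ) (i : ℕ) :
    sCount (transpose q) i
      = ((Finset.range (maxPart q)).filter (fun k => i ≤ sCount q (k + 1))).card := by
  unfold sCount transpose
  rw [Multiset.filter_map, Multiset.card_map]
  rw [← Finset.range_val]
  rfl

lemma sCount_half (p : Multiset ℕ) (k : ℕ) :
    sCount ((p.map fun b => b / 2).filter fun x => 0 < x) (k + 1) = sCount p (2 * k + 2) := by
  unfold sCount
  rw [Multiset.filter_filter]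
  have h1 : Multiset.filter (fun x => k + 1 ≤ x ∧ 0 < x) (p.map fun b => b / 2)
      = Multiset.filter (fun x => k + 1 ≤ x) (p.map fun b => b / 2) := by
    apply Multiset.filter_congr
    intro x _
    constructor
    · tauto
    · intro h; exact ⟨h, by omega⟩
  rw [h1, Multiset.filter_map, Multiset.card_map]
  have h2 : Multiset.filter ((fun x => k + 1 ≤ x) ∘ fun b => b / 2) p
      = Multiset.filter (fun a => 2 * k + 2 ≤ a) p := by
    apply Multiset.filter_congr
    intro x _
    simp only [Function.comp]
    constructor <;> (intro h; omega)
  rw [h2]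

lemma sCount_pOne (p : Multiset ℕ) (j : ℕ) :
    sCount (pOne p) (j + 1) = Dp p j / 2 := by
  unfold pOne
  rw [sCount_transpose]
  have habs : ∀ k : ℕ, 2 * k + 2 ≤ Dp p j →
      k < maxPart ((p.map fun b => b / 2).filter fun x => 0 < x) := by
    intro k hk
    have h1 : j + 1 ≤ sCount p (2 * k + 2) := (Dp_iff p j (2 * k + 2) (by omega)).mpr hk
    obtain ⟨a, ha, hia⟩ := (sCount_pos_iff p (2 * k + 2)).mp (by omega)
    have hmem : a / 2 ∈ (p.map fun b => b / 2).filter fun x => 0 < x := by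
      rw [Multiset.mem_filter]
      exact ⟨Multiset.mem_map_of_mem _ ha, by omega⟩
    have := le_maxPart_of_mem hmem
    omega
  have hset : (Finset.range (maxPart ((p.map fun b => b / 2).filter fun x => 0 < x))).filter
        (fun k => j + 1 ≤ sCount ((p.map fun b => b / 2).filter fun x => 0 < x) (k + 1))
      = Finset.range (Dp p j / 2) := by
    ext k
    simp only [Finset.mem_filter, Finset.mem_range, sCount_half]
    constructor
    · intro ⟨hk, hcount⟩
      have := (Dp_iff p j (2 * k + 2) (by omega)).mp hcount
      omega
    · intro hk
      have h2 : 2 * k + 2 ≤ Dp p j := by omega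
      exact ⟨habs k h2, (Dp_iff p j (2 * k + 2) (by omega)).mpr h2⟩
  rw [hset, Finset.card_range]

lemma Dp_transpose (Q : Multiset ℕ) (hpos : ∀ a ∈ Q, 0 < a) (j : ℕ) :
    Dp (transpose Q) j = sCount Q (j + 1) := by
  have hc : sCount Q (j + 1) ≤ Q.sum := le_trans (sCount_le_card Q _) (card_le_sum hpos)
  have hkey : ∀ i, 1 ≤ i → (j + 1 ≤ sCount (transpose Q) i ↔ i ≤ sCount Q (j + 1)) := by
    intro i hi
    rw [sCount_transpose]
    constructor
    · intro h
      by_contra hcon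
      push_neg at hcon
      have hsub : (Finset.range (maxPart Q)).filter (fun k => i ≤ sCount Q (k + 1))
          ⊆ Finset.range j := by
        intro k hk
        simp only [Finset.mem_filter, Finset.mem_range] at hk ⊢
        by_contra hkj
        push_neg at hkj
        have := sCount_mono Q (show j + 1 ≤ k + 1 by omega)
        omega
      have := Finset.card_le_card hsub
      rw [Finset.card_range] at this
      omega
    · intro h
      have hjM : j < maxPart Q := by
        obtain ⟨a, ha, hja⟩ := (sCount_pos_iff Q (j + 1)).mp (by omega)
        have := le_maxPart_of_mem ha
        omega
      have hsub : Finset.range (j + 1)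
          ⊆ (Finset.range (maxPart Q)).filter (fun k => i ≤ sCount Q (k + 1)) := by
        intro k hk
        simp only [Finset.mem_range] at hk
        simp only [Finset.mem_filter, Finset.mem_range]
        refine ⟨by omega, le_trans h (sCount_mono Q (by omega))⟩
      have := Finset.card_le_card hsub
      rw [Finset.card_range] at this
      omega
  unfold Dp
  have hset : (Finset.Icc 1 (transpose Q).sum).filter (fun i => j + 1 ≤ sCount (transpose Q) i)
      = Finset.Icc 1 (sCount Q (j + 1)) := by
    ext i
    simp only [Finset.mem_filter, Finset.mem_Icc, sum_transpose]
    constructor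
    · intro ⟨⟨h1, h2⟩, h3⟩
      exact ⟨h1, (hkey i h1).mp h3⟩
    · intro ⟨h1, h2⟩
      exact ⟨⟨h1, le_trans h2 hc⟩, (hkey i h1).mpr h2⟩
  rw [hset, Nat.card_Icc, Nat.add_sub_cancel]
lemma Dp_zero {p : Multiset ℕ} (hne : p ≠ 0) : Dp p 0 = maxPart p := by
  unfold Dp
  have hset : (Finset.Icc 1 p.sum).filter (fun i => 0 + 1 ≤ sCount p i)
      = Finset.Icc 1 (maxPart p) := by
    ext i
    simp only [Finset.mem_filter, Finset.mem_Icc, zero_add]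
    constructor
    · intro ⟨⟨h1, h2⟩, h3⟩
      obtain ⟨a, ha, hia⟩ := (sCount_pos_iff p i).mp h3
      exact ⟨h1, le_trans hia (le_maxPart_of_mem ha)⟩
    · intro ⟨h1, h2⟩
      refine ⟨⟨h1, le_trans h2 (maxPart_le_sum p)⟩, ?_⟩
      exact (sCount_pos_iff p i).mpr ⟨maxPart p, maxPart_mem hne, h2⟩
  rw [hset, Nat.card_Icc, Nat.add_sub_cancel]

lemma sum_Dp (p : Multiset ℕ) (N : ℕ) (hN : Multiset.card p ≤ N) :
    ∑ j ∈ Finset.range N, Dp p j = p.sum := by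
  unfold Dp
  simp only [Finset.card_filter]
  rw [Finset.sum_comm]
  have h1 : ∀ i, ∑ j ∈ Finset.range N, (if j + 1 ≤ sCount p i then 1 else 0) = sCount p i := by
    intro i
    rw [← min_eq_card]
    exact min_eq_right (le_trans (sCount_le_card p i) hN)
  rw [Finset.sum_congr rfl (fun i _ => h1 i)]
  rw [← Finset.Ico_add_one_right_eq_Icc, Finset.sum_Ico_eq_sum_range]
  simp only [Nat.add_sub_cancel]
  rw [Finset.sum_congr rfl (fun i _ => by rw [Nat.add_comm 1 i])]
  exact sum_sCount_range p p.sum (fun b hb => Multiset.single_le_sum (fun x _ => Nat.zero_le x) b hb)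

lemma card_pOne_aux (p : Multiset ℕ) {b : ℕ} (hb : b ∈ pOne p) : b ≤ Multiset.card p := by
  unfold pOne transpose at hb
  rw [Multiset.mem_map] at hb
  obtain ⟨k, _, rfl⟩ := hb
  calc sCount _ (k + 1) ≤ Multiset.card ((p.map fun b => b / 2).filter fun x => 0 < x) :=
        sCount_le_card _ _
    _ ≤ Multiset.card (p.map fun b => b / 2) := Multiset.card_le_card (Multiset.filter_le _ _)
    _ = Multiset.card p := Multiset.card_map _ _

lemma sum_filter_pos (q : Multiset ℕ) : (q.filter fun x => 0 < x).sum = q.sum := by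
  induction q using Multiset.induction with
  | empty => simp
  | cons a s ih =>
    rw [Multiset.filter_cons, Multiset.sum_cons, Multiset.sum_add, ih]
    split <;> simp <;> omega

lemma sum_split (p : Multiset ℕ) : p.sum = 2 * (p.map fun b => b / 2).sum + oddMult p := by
  induction p using Multiset.induction with
  | empty => simp [oddMult]
  | cons a s ih =>
    unfold oddMult at *
    rw [Multiset.sum_cons, Multiset.map_cons, Multiset.sum_cons, Multiset.filter_cons,
      Multiset.card_add]
    split <;> simp only [Multiset.card_singleton, Multiset.card_zero] <;> omega

lemma pOne_sum (p : Multiset ℕ) : p.sum = 2 * (pOne p).sum + oddMult p := by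
  have h1 : (pOne p).sum = (p.map fun b => b / 2).sum := by
    unfold pOne
    rw [sum_transpose, sum_filter_pos]
  rw [h1]
  exact sum_split p

lemma oddsum_eq (p : Multiset ℕ) (N : ℕ) (hN : Multiset.card p ≤ N) :
    ∑ j ∈ Finset.range N, (Dp p j % 2) = oddMult p := by
  have h1 : ∑ j ∈ Finset.range N, Dp p j = p.sum := sum_Dp p N hN
  have h2 : ∑ j ∈ Finset.range N, (Dp p j / 2) = (pOne p).sum := by
    have : ∀ j, Dp p j / 2 = sCount (pOne p) (j + 1) := fun j => (sCount_pOne p j).symm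
    rw [Finset.sum_congr rfl (fun j _ => this j)]
    exact sum_sCount_range (pOne p) N (fun b hb => le_trans (card_pOne_aux p hb) hN)
  have h3 : ∑ j ∈ Finset.range N, Dp p j
      = 2 * (∑ j ∈ Finset.range N, (Dp p j / 2)) + ∑ j ∈ Finset.range N, (Dp p j % 2) := by
    rw [Finset.mul_sum, ← Finset.sum_add_distrib]
    exact Finset.sum_congr rfl (fun j _ => by omega)
  have h4 := pOne_sum p
  omega

lemma oddsum_le (p : Multiset ℕ) (m : ℕ) :
    ∑ j ∈ Finset.range m, (Dp p j % 2) ≤ oddMult p := by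
  have h1 : ∑ j ∈ Finset.range m, (Dp p j % 2)
      ≤ ∑ j ∈ Finset.range (m + Multiset.card p), (Dp p j % 2) :=
    Finset.sum_le_sum_of_subset (Finset.range_subset_range.mpr (by omega))
  rw [oddsum_eq p (m + Multiset.card p) (by omega)] at h1
  exact h1

lemma sCount_sum_succ (p : Multiset ℕ) : sCount p (p.sum + 1) = 0 := by
  by_contra h
  obtain ⟨a, ha, hia⟩ := (sCount_pos_iff p (p.sum + 1)).mp (by omega)
  have := Multiset.single_le_sum (fun x (_ : x ∈ p) => Nat.zero_le x) a ha
  omega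

lemma topSum_pPlus_le {p : Multiset ℕ} (hne : p ≠ 0) (m : ℕ) :
    topSum (pPlus p) m ≤ topSum p m + min 1 m := by
  set b := maxPart p with hbdef
  have hb : b ∈ p := maxPart_mem hne
  have hce : b ::ₘ p.erase b = p := Multiset.cons_erase hb
  have hsum : (pPlus p).sum = p.sum + 1 := by
    have h1 := congrArg Multiset.sum hce
    rw [Multiset.sum_cons] at h1
    unfold pPlus
    rw [Multiset.sum_cons, ← hbdef]
    omega
  have hsC : ∀ i, sCount (pPlus p) i ≤ sCount p i + (if i = b + 1 then 1 else 0) := by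
    intro i
    have h2 : sCount p i = (if i ≤ b then 1 else 0) + sCount (p.erase b) i := by
      conv_lhs => rw [← hce, sCount_cons]
    unfold pPlus
    rw [← hbdef, sCount_cons, h2]
    split <;> split <;> split <;> omega
  unfold topSum
  rw [hsum, Finset.sum_Icc_succ_top (by omega)]
  have hle : ∑ i ∈ Finset.Icc 1 p.sum, min m (sCount (pPlus p) i)
      ≤ ∑ i ∈ Finset.Icc 1 p.sum, (min m (sCount p i) + if i = b + 1 then min 1 m else 0) := by
    apply Finset.sum_le_sum
    intro i _
    have h := hsC i
    by_cases hib : i = b + 1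
    · rw [if_pos hib] at h ⊢
      omega
    · rw [if_neg hib] at h ⊢
      omega
  have hsplit : ∑ i ∈ Finset.Icc 1 p.sum, (min m (sCount p i) + if i = b + 1 then min 1 m else 0)
      = (∑ i ∈ Finset.Icc 1 p.sum, min m (sCount p i))
        + ∑ i ∈ Finset.Icc 1 p.sum, (if i = b + 1 then min 1 m else 0) := by
    rw [Finset.sum_add_distrib]
  have hb1 : b ≤ p.sum := maxPart_le_sum p
  have hlast0 : sCount (pPlus p) (p.sum + 1) ≤ if p.sum + 1 = b + 1 then 1 else 0 := by
    have h := hsC (p.sum + 1)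
    rw [sCount_sum_succ] at h
    omega
  have hite : ∑ i ∈ Finset.Icc 1 p.sum, (if i = b + 1 then min 1 m else 0)
      = if b + 1 ∈ Finset.Icc 1 p.sum then min 1 m else 0 :=
    Finset.sum_ite_eq' (Finset.Icc 1 p.sum) (b + 1) (fun _ => min 1 m)
  by_cases hbS : b + 1 ≤ p.sum
  · rw [if_pos (Finset.mem_Icc.mpr ⟨by omega, hbS⟩)] at hite
    rw [if_neg (by omega)] at hlast0
    omega
  · rw [if_neg (by rw [Finset.mem_Icc]; omega)] at hite
    rw [if_pos (by omega)] at hlast0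
    omega

/-- `p` a symplectic partition of `2n` with `b₁` (the largest part) even,
`P = [p₁ p₁ (2n*+1)]` with `2n* = Σ_{b_i odd} a_i`.  Then `P^t ≥ p^+` in the dominance
order on partitions of `2n+1`. -/
theorem transpose_ge_pPlus (n : ℕ) (p : Multiset ℕ) (hne : p ≠ 0)
    (hp : IsPartitionOf p (2 * n)) (hsymp : IsSymplectic p)
    (hb1 : maxPart p % 2 = 0) :
    domLE (pPlus p) (transpose ((oddMult p + 1) ::ₘ (pOne p + pOne p))) := by
  intro m
  set Q := (oddMult p + 1) ::ₘ (pOne p + pOne p) with hQ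
  have hQpos : ∀ a ∈ Q, 0 < a := by
    intro a ha
    rw [hQ, Multiset.mem_cons] at ha
    rcases ha with rfl | ha
    · omega
    · rw [Multiset.mem_add] at ha
      rcases ha with ha | ha <;> exact pos_of_mem_transpose ha
  have h1 : topSum (pPlus p) m ≤ topSum p m + min 1 m := topSum_pPlus_le hne m
  have h2 : topSum p m = ∑ j ∈ Finset.range m, Dp p j := topSum_eq p m
  have h3 : topSum (transpose Q) m = ∑ j ∈ Finset.range m, sCount Q (j + 1) := by
    rw [topSum_eq]
    exact Finset.sum_congr rfl (fun j _ => Dp_transpose Q hQpos j)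
  have h4 : ∀ j, sCount Q (j + 1)
      = (if j + 1 ≤ oddMult p + 1 then 1 else 0) + 2 * (Dp p j / 2) := by
    intro j
    rw [hQ, sCount_cons, sCount_add, sCount_pOne]
    omega
  rw [h3, Finset.sum_congr rfl (fun j _ => h4 j), Finset.sum_add_distrib, ← min_eq_card,
    ← Finset.mul_sum]
  have h5 : ∑ j ∈ Finset.range m, Dp p j
      = 2 * (∑ j ∈ Finset.range m, (Dp p j / 2)) + ∑ j ∈ Finset.range m, (Dp p j % 2) := by
    rw [Finset.mul_sum, ← Finset.sum_add_distrib]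
    exact Finset.sum_congr rfl (fun j _ => by omega)
  have hkey : ∑ j ∈ Finset.range m, (Dp p j % 2) + min 1 m ≤ min m (oddMult p + 1) := by
    rcases Nat.eq_zero_or_pos m with rfl | hm
    · simp
    · have e0 : Dp p 0 % 2 = 0 := by
        rw [Dp_zero hne]
        omega
      have esplit : ∑ j ∈ Finset.range m, (Dp p j % 2)
          = Dp p 0 % 2 + ∑ j ∈ Finset.Ico 1 m, (Dp p j % 2) := by
        rw [Finset.range_eq_Ico]
        exact Finset.sum_eq_sum_Ico_succ_bot hm _
      have b1 : ∑ j ∈ Finset.Ico 1 m, (Dp p j % 2) ≤ m - 1 := by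
        calc ∑ j ∈ Finset.Ico 1 m, (Dp p j % 2) ≤ ∑ j ∈ Finset.Ico 1 m, 1 :=
              Finset.sum_le_sum (fun j _ => by omega)
          _ = m - 1 := by rw [Finset.sum_const, Nat.card_Ico, smul_eq_mul, mul_one]
      have b2 : ∑ j ∈ Finset.range m, (Dp p j % 2) ≤ oddMult p := oddsum_le p m
      omega
  omega


end JiangWF
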